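/- (Fundamental theorem, existence of basic optimal solutions.) Consider the constraint system A_E *ᵥ x = b_E, A_I *ᵥ x ≥ b_I, ℓ ≤ x ≤ u. Combine all constraint rows into the family r : (Fin m ⊕ Fin n ⊕ Fin d ⊕ Fin d) → (Fin d → ℝ) where r assigns to the first summand the rows of A_E, to the second summand the rows of A_I, to the third summand the standard basis vectors e_i (for the lower bounds x_i ≥ ℓ_i), and to the fourth summand the vectors −e_i (for the upper bounds −x_i ≥ −u_i), with corresponding right-hand sides β given by b_E, b_I, ℓ, and −u. Call a vector x a basic solution if there exists a finset S of indices with S.card = d such that the family of rows (r s)_{s ∈ S} is linearly independent over ℝ and r s ⬝ᵥ x = β s for every s ∈ S. If there exists a feasible x₀ with c ⬝ᵥ x₀ ≤ c ⬝ᵥ x̄ for every feasible x̄ (an optimal solution), then there exists a basic feasible x* with c ⬝ᵥ x* ≤ c ⬝ᵥ x̄ for every feasible x̄ (a basic optimal solution). -/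

import Mathlib

open Matrix Finset

lemma lp_move {d : ℕ} {ι : Type*} [Fintype ι] (r : ι → Fin d → ℝ) (β : ι → ℝ)
    (x : Fin d → ℝ) (hx : ∀ s, β s ≤ r s ⬝ᵥ x)
    (w : Fin d → ℝ) (hw : ∀ s, r s ⬝ᵥ x = β s → r s ⬝ᵥ w = 0)
    (s₁ : ι) (hs₁ : r s₁ ⬝ᵥ w < 0) :
    ∃ t : ℝ, 0 < t ∧ (∀ s, β s ≤ r s ⬝ᵥ (x + t • w)) ∧
      ∃ s₀, r s₀ ⬝ᵥ x ≠ β s₀ ∧ r s₀ ⬝ᵥ (x + t • w) = β s₀ := by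
  classical
  set N : Finset ι := Finset.univ.filter (fun s => r s ⬝ᵥ w < 0) with hN
  have hs₁N : s₁ ∈ N := by simp [hN, hs₁]
  have hNne : N.Nonempty := ⟨s₁, hs₁N⟩
  have hslack : ∀ s ∈ N, 0 < r s ⬝ᵥ x - β s := by
    intro s hs
    have hneg : r s ⬝ᵥ w < 0 := by simpa [hN] using hs
    have hne : r s ⬝ᵥ x ≠ β s := fun h => absurd (hw s h) (ne_of_lt hneg)
    have := hx s
    cases lt_or_eq_of_le this with
    | inl h => linarith
    | inr h => exact absurd h.symm hne
  set f : ι → ℝ := fun s => (r s ⬝ᵥ x - β s) / (-(r s ⬝ᵥ w)) with hf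
  set t := N.inf' hNne f with ht
  have htpos : 0 < t := by
    rw [ht, Finset.lt_inf'_iff]
    intro s hs
    have hneg : r s ⬝ᵥ w < 0 := by simpa [hN] using hs
    exact div_pos (hslack s hs) (by linarith)
  have hkey : ∀ s ∈ N, f s * (r s ⬝ᵥ w) = -(r s ⬝ᵥ x - β s) := by
    intro s hs
    have hneg : r s ⬝ᵥ w < 0 := by simpa [hN] using hs
    have hne0 : -(r s ⬝ᵥ w) ≠ 0 := by intro h; rw [neg_eq_zero] at h; exact absurd h (ne_of_lt hneg)
    calc f s * (r s ⬝ᵥ w) = -((r s ⬝ᵥ x - β s) / (-(r s ⬝ᵥ w)) * (-(r s ⬝ᵥ w))) := by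
          rw [hf]; ring
      _ = -(r s ⬝ᵥ x - β s) := by rw [div_mul_cancel₀ _ hne0]
  have hval : ∀ s, r s ⬝ᵥ (x + t • w) = r s ⬝ᵥ x + t * (r s ⬝ᵥ w) := by
    intro s; simp [dotProduct_add, dotProduct_smul, smul_eq_mul]
  refine ⟨t, htpos, ?_, ?_⟩
  · intro s
    rw [hval]
    rcases le_or_gt 0 (r s ⬝ᵥ w) with hpos | hneg
    · nlinarith [hx s]
    · have hsN : s ∈ N := by simp [hN, hneg]
      have hle : t ≤ f s := ht ▸ Finset.inf'_le f hsN
      have := hkey s hsN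
      nlinarith [mul_le_mul_of_nonpos_right hle (le_of_lt hneg)]
  · obtain ⟨s₀, hs₀N, hs₀⟩ := Finset.exists_mem_eq_inf' hNne f
    have hneg : r s₀ ⬝ᵥ w < 0 := by simpa [hN] using hs₀N
    have hne : r s₀ ⬝ᵥ x ≠ β s₀ := fun h => absurd (hw s₀ h) (ne_of_lt hneg)
    refine ⟨s₀, hne, ?_⟩
    have := hkey s₀ hs₀N
    rw [hval, ht, hs₀]
    linarith

lemma lp_step {d : ℕ} {ι : Type*} [Fintype ι] (r : ι → Fin d → ℝ) (β : ι → ℝ)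
    (c : Fin d → ℝ) (P : (Fin d → ℝ) → Prop)
    (hPle : ∀ x, P x → ∀ s, β s ≤ r s ⬝ᵥ x)
    (hPext : ∀ x y, P x → (∀ s, β s ≤ r s ⬝ᵥ y) →
      (∀ s, r s ⬝ᵥ x = β s → r s ⬝ᵥ y = β s) → P y)
    (hdir : ∀ w : Fin d → ℝ, w ≠ 0 → ∃ s, r s ⬝ᵥ w < 0)
    (x : Fin d → ℝ) (hx : P x) (hxopt : ∀ y, P y → c ⬝ᵥ x ≤ c ⬝ᵥ y)
    (z : Fin d → ℝ) (hz0 : z ≠ 0) (hz : ∀ s, r s ⬝ᵥ x = β s → r s ⬝ᵥ z = 0) :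
    ∃ x', P x' ∧ (∀ y, P y → c ⬝ᵥ x' ≤ c ⬝ᵥ y) ∧
      (∀ s, r s ⬝ᵥ x = β s → r s ⬝ᵥ x' = β s) ∧
      ∃ s₀, r s₀ ⬝ᵥ x ≠ β s₀ ∧ r s₀ ⬝ᵥ x' = β s₀ := by
  have hxle := hPle x hx
  obtain ⟨s₁, hs₁⟩ := hdir z hz0
  have hz0' : -z ≠ 0 := neg_ne_zero.mpr hz0
  obtain ⟨s₂, hs₂⟩ := hdir (-z) hz0'
  have hzneg : ∀ s, r s ⬝ᵥ x = β s → r s ⬝ᵥ (-z) = 0 := by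
    intro s hs; rw [dotProduct_neg, hz s hs, neg_zero]
  obtain ⟨t, htpos, hineq, s₀, hs₀ne, hs₀eq⟩ := lp_move r β x hxle z hz s₁ hs₁
  obtain ⟨t', ht'pos, hineq', _⟩ := lp_move r β x hxle (-z) hzneg s₂ hs₂
  have htight : ∀ s, r s ⬝ᵥ x = β s → r s ⬝ᵥ (x + t • z) = β s := by
    intro s hs
    rw [dotProduct_add, dotProduct_smul, hz s hs, smul_zero, add_zero, hs]
  have htight' : ∀ s, r s ⬝ᵥ x = β s → r s ⬝ᵥ (x + t' • (-z)) = β s := by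
    intro s hs
    rw [dotProduct_add, dotProduct_smul, hzneg s hs, smul_zero, add_zero, hs]
  have hP1 : P (x + t • z) := hPext x _ hx hineq htight
  have hP2 : P (x + t' • (-z)) := hPext x _ hx hineq' htight'
  have e1 : c ⬝ᵥ (x + t • z) = c ⬝ᵥ x + t * (c ⬝ᵥ z) := by
    simp [dotProduct_add, dotProduct_smul, smul_eq_mul]
  have e2 : c ⬝ᵥ (x + t' • (-z)) = c ⬝ᵥ x - t' * (c ⬝ᵥ z) := by
    simp [dotProduct_add, dotProduct_smul, dotProduct_neg, smul_eq_mul]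
    ring
  have h1 := hxopt _ hP1
  have h2 := hxopt _ hP2
  have hcz : c ⬝ᵥ z = 0 := by
    rw [e1] at h1; rw [e2] at h2
    nlinarith
  refine ⟨x + t • z, hP1, ?_, htight, s₀, hs₀ne, hs₀eq⟩
  intro y hy
  rw [e1, hcz, mul_zero, add_zero]
  exact hxopt y hy

lemma lp_span_top {d : ℕ} {ι : Type*} [Fintype ι] (r : ι → Fin d → ℝ) (β : ι → ℝ)
    (x : Fin d → ℝ)
    (h : ∀ z : Fin d → ℝ, (∀ s, r s ⬝ᵥ x = β s → r s ⬝ᵥ z = 0) → z = 0) :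
    Submodule.span ℝ (r '' {s | r s ⬝ᵥ x = β s}) = ⊤ := by
  classical
  set T : Finset ι := Finset.univ.filter (fun s => r s ⬝ᵥ x = β s) with hT
  set M : Matrix T (Fin d) ℝ := fun s i => r s.1 i with hM
  have hker : LinearMap.ker M.mulVecLin = ⊥ := by
    rw [LinearMap.ker_eq_bot']
    intro z hzker
    apply h
    intro s hs
    have hsT : s ∈ T := by simp [hT, hs]
    exact congrFun hzker ⟨s, hsT⟩
  have hrank : M.rank = d := by
    have := LinearMap.finrank_range_add_finrank_ker M.mulVecLin
    rw [hker, finrank_bot, add_zero, Module.finrank_pi] at this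
    simpa [Matrix.rank, Fintype.card_fin] using this
  have himg : Set.range (fun s : T => r s.1) = r '' {s | r s ⬝ᵥ x = β s} := by
    ext v
    constructor
    · rintro ⟨s, rfl⟩
      exact ⟨s.1, (Finset.mem_filter.mp s.2).2, rfl⟩
    · rintro ⟨s, hs, rfl⟩
      exact ⟨⟨s, by simp only [hT, Finset.mem_filter, Finset.mem_univ, true_and]; exact hs⟩, rfl⟩
  have hcols : Mᵀ.rank = Module.finrank ℝ (Submodule.span ℝ (Set.range Mᵀᵀ)) :=
    Matrix.rank_eq_finrank_span_cols Mᵀ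
  rw [Matrix.rank_transpose, hrank] at hcols
  have hMTT : Set.range Mᵀᵀ = r '' {s | r s ⬝ᵥ x = β s} := by
    rw [Matrix.transpose_transpose]
    exact himg
  rw [hMTT] at hcols
  apply Submodule.eq_top_of_finrank_eq
  rw [← hcols, Module.finrank_pi, Fintype.card_fin]

lemma lp_extract {d : ℕ} {ι : Type*} [Fintype ι] (r : ι → Fin d → ℝ) (β : ι → ℝ)
    (x : Fin d → ℝ)
    (h : Submodule.span ℝ (r '' {s | r s ⬝ᵥ x = β s}) = ⊤) :
    ∃ S : Finset ι, S.card = d ∧ LinearIndependent ℝ (fun s : S => r s) ∧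
      ∀ s ∈ S, r s ⬝ᵥ x = β s := by
  classical
  obtain ⟨t, hts, hspan, hli⟩ := exists_linearIndependent ℝ (r '' {s | r s ⬝ᵥ x = β s})
  rw [h] at hspan
  have htfin : t.Finite :=
    Set.Finite.subset (Set.Finite.image r (Set.toFinite _)) hts
  haveI : Fintype t := htfin.fintype
  have hcard : t.toFinset.card = d := by
    have := finrank_span_set_eq_card (s := t) hli
    rw [hspan] at this
    rw [← this, finrank_top, Module.finrank_pi, Fintype.card_fin]
  -- choice function
  have hchoice : ∀ v : t, ∃ s : ι, r s ⬝ᵥ x = β s ∧ r s = v.1 := by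
    intro v
    obtain ⟨s, hs, hrs⟩ := hts v.2
    exact ⟨s, hs, hrs⟩
  choose g hg1 hg2 using hchoice
  have hginj : Function.Injective g := by
    intro v w hvw
    apply Subtype.ext
    rw [← hg2 v, ← hg2 w, hvw]
  refine ⟨Finset.image g Finset.univ, ?_, ?_, ?_⟩
  · rw [Finset.card_image_of_injective _ hginj, Finset.card_univ, ← Set.toFinset_card, hcard]
  · have hmem : ∀ s : (Finset.image g Finset.univ : Finset ι), (r s.1) ∈ t := by
      rintro ⟨s, hs⟩
      obtain ⟨v, _, rfl⟩ := Finset.mem_image.mp hs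
      rw [hg2 v]; exact v.2
    have hrepr : ∀ s : (Finset.image g Finset.univ : Finset ι), s.1 = g ⟨r s.1, hmem s⟩ := by
      rintro ⟨s, hs⟩
      obtain ⟨v, _, rfl⟩ := Finset.mem_image.mp hs
      exact congrArg g (Subtype.ext (hg2 v).symm)
    have : (fun s : (Finset.image g Finset.univ : Finset ι) => r s.1) =
        Subtype.val ∘ (fun s => (⟨r s.1, hmem s⟩ : t)) := by
      funext s; rfl
    rw [this]
    apply hli.comp
    intro a b hab
    have : (⟨r a.1, hmem a⟩ : t) = ⟨r b.1, hmem b⟩ := hab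
    apply Subtype.ext
    rw [hrepr a, hrepr b]
    congr 1
  · intro s hs
    obtain ⟨v, _, rfl⟩ := Finset.mem_image.mp hs
    exact hg1 v

lemma lp_main {d : ℕ} {ι : Type*} [Fintype ι] (r : ι → Fin d → ℝ) (β : ι → ℝ)
    (c : Fin d → ℝ) (P : (Fin d → ℝ) → Prop)
    (hPle : ∀ x, P x → ∀ s, β s ≤ r s ⬝ᵥ x)
    (hPext : ∀ x y, P x → (∀ s, β s ≤ r s ⬝ᵥ y) →
      (∀ s, r s ⬝ᵥ x = β s → r s ⬝ᵥ y = β s) → P y)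
    (hdir : ∀ w : Fin d → ℝ, w ≠ 0 → ∃ s, r s ⬝ᵥ w < 0)
    (x₀ : Fin d → ℝ) (hx₀ : P x₀) (hx₀opt : ∀ y, P y → c ⬝ᵥ x₀ ≤ c ⬝ᵥ y) :
    ∃ x, P x ∧ (∀ y, P y → c ⬝ᵥ x ≤ c ⬝ᵥ y) ∧
      ∀ z : Fin d → ℝ, (∀ s, r s ⬝ᵥ x = β s → r s ⬝ᵥ z = 0) → z = 0 := by
  classical
  have key : ∀ k : ℕ, ∀ x : Fin d → ℝ, P x → (∀ y, P y → c ⬝ᵥ x ≤ c ⬝ᵥ y) →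
      (Finset.univ.filter (fun s => r s ⬝ᵥ x ≠ β s)).card ≤ k →
      ∃ x', P x' ∧ (∀ y, P y → c ⬝ᵥ x' ≤ c ⬝ᵥ y) ∧
        ∀ z : Fin d → ℝ, (∀ s, r s ⬝ᵥ x' = β s → r s ⬝ᵥ z = 0) → z = 0 := by
    intro k
    induction k with
    | zero =>
      intro x hx hxopt hcard
      refine ⟨x, hx, hxopt, ?_⟩
      intro z hz
      by_contra hz0
      obtain ⟨s, hs⟩ := hdir z hz0
      have hall : ∀ s, r s ⬝ᵥ x = β s := by
        intro s'
        by_contra hne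
        have : s' ∈ Finset.univ.filter (fun s => r s ⬝ᵥ x ≠ β s) := by simp [hne]
        have := Finset.card_pos.mpr ⟨s', this⟩
        omega
      exact absurd (hz s (hall s)) (ne_of_lt hs)
    | succ k ih =>
      intro x hx hxopt hcard
      by_cases hz : ∃ z : Fin d → ℝ, z ≠ 0 ∧ ∀ s, r s ⬝ᵥ x = β s → r s ⬝ᵥ z = 0
      · obtain ⟨z, hz0, hzt⟩ := hz
        obtain ⟨x', hx', hx'opt, htight, s₀, hs₀ne, hs₀eq⟩ :=
          lp_step r β c P hPle hPext hdir x hx hxopt z hz0 hzt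
        apply ih x' hx' hx'opt
        have hsub : Finset.univ.filter (fun s => r s ⬝ᵥ x' ≠ β s) ⊆
            (Finset.univ.filter (fun s => r s ⬝ᵥ x ≠ β s)).erase s₀ := by
          intro s hs
          simp only [Finset.mem_filter, Finset.mem_univ, true_and] at hs
          rw [Finset.mem_erase]
          constructor
          · rintro rfl; exact hs hs₀eq
          · simp only [Finset.mem_filter, Finset.mem_univ, true_and]
            intro heq; exact hs (htight s heq)
        have h1 := Finset.card_le_card hsub
        have h2 : ((Finset.univ.filter (fun s => r s ⬝ᵥ x ≠ β s)).erase s₀).card <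
            (Finset.univ.filter (fun s => r s ⬝ᵥ x ≠ β s)).card := by
          apply Finset.card_erase_lt_of_mem
          simp [hs₀ne]
        omega
      · push_neg at hz
        refine ⟨x, hx, hxopt, ?_⟩
        intro z hzt
        by_contra hz0
        obtain ⟨s, hs1, hs2⟩ := hz z hz0
        exact hs2 (hzt s hs1)
  exact key _ x₀ hx₀ hx₀opt le_rfl

theorem facet_basic_optimal_exists (d m n : ℕ)
    (A_E : Matrix (Fin m) (Fin d) ℝ) (A_I : Matrix (Fin n) (Fin d) ℝ)
    (b_E : Fin m → ℝ) (b_I : Fin n → ℝ) (ℓ u : Fin d → ℝ) (c : Fin d → ℝ)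
    (r : Fin m ⊕ Fin n ⊕ Fin d ⊕ Fin d → Fin d → ℝ)
    (β : Fin m ⊕ Fin n ⊕ Fin d ⊕ Fin d → ℝ)
    (hr : r = Sum.elim (fun i => A_E i)
          (Sum.elim (fun j => A_I j)
            (Sum.elim (fun i => Pi.single i (1 : ℝ))
              (fun i => -Pi.single i (1 : ℝ)))))
    (hβ : β = Sum.elim b_E (Sum.elim b_I (Sum.elim ℓ (fun i => -u i))))
    (hopt : ∃ x₀ : Fin d → ℝ,
      (A_E *ᵥ x₀ = b_E ∧ A_I *ᵥ x₀ ≥ b_I ∧ ℓ ≤ x₀ ∧ x₀ ≤ u) ∧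
      ∀ xbar : Fin d → ℝ, (A_E *ᵥ xbar = b_E ∧ A_I *ᵥ xbar ≥ b_I ∧ ℓ ≤ xbar ∧ xbar ≤ u) →
        c ⬝ᵥ x₀ ≤ c ⬝ᵥ xbar) :
    ∃ x : Fin d → ℝ,
      (A_E *ᵥ x = b_E ∧ A_I *ᵥ x ≥ b_I ∧ ℓ ≤ x ∧ x ≤ u) ∧
      (∃ S : Finset (Fin m ⊕ Fin n ⊕ Fin d ⊕ Fin d),
        S.card = d ∧
        LinearIndependent ℝ (fun s : S => r s) ∧
        ∀ s ∈ S, r s ⬝ᵥ x = β s) ∧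
      (∀ xbar : Fin d → ℝ, (A_E *ᵥ xbar = b_E ∧ A_I *ᵥ xbar ≥ b_I ∧ ℓ ≤ xbar ∧ xbar ≤ u) →
        c ⬝ᵥ x ≤ c ⬝ᵥ xbar) := by
  subst hr hβ
  set P : (Fin d → ℝ) → Prop :=
    fun x => A_E *ᵥ x = b_E ∧ A_I *ᵥ x ≥ b_I ∧ ℓ ≤ x ∧ x ≤ u with hP
  set r : Fin m ⊕ Fin n ⊕ Fin d ⊕ Fin d → Fin d → ℝ :=
    Sum.elim (fun i => A_E i)
      (Sum.elim (fun j => A_I j)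
        (Sum.elim (fun i => Pi.single i (1 : ℝ)) (fun i => -Pi.single i (1 : ℝ)))) with hrdef
  set β : Fin m ⊕ Fin n ⊕ Fin d ⊕ Fin d → ℝ :=
    Sum.elim b_E (Sum.elim b_I (Sum.elim ℓ (fun i => -u i))) with hβdef
  have hrow : ∀ (x : Fin d → ℝ),
      (∀ i, r (Sum.inl i) ⬝ᵥ x = A_E i ⬝ᵥ x) ∧ True := fun x => ⟨fun i => rfl, trivial⟩
  have hPle : ∀ x, P x → ∀ s, β s ≤ r s ⬝ᵥ x := by
    rintro x ⟨hE, hI, hl, hu⟩ s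
    rcases s with i | j | i | i
    · have : (A_E *ᵥ x) i = A_E i ⬝ᵥ x := rfl
      simp only [hrdef, hβdef, Sum.elim_inl]
      rw [← this, hE]
    · have : (A_I *ᵥ x) j = A_I j ⬝ᵥ x := rfl
      simp only [hrdef, hβdef, Sum.elim_inr, Sum.elim_inl]
      rw [← this]; exact hI j
    · simp only [hrdef, hβdef, Sum.elim_inr, Sum.elim_inl, single_dotProduct, one_mul]
      exact hl i
    · simp only [hrdef, hβdef, Sum.elim_inr, neg_dotProduct, single_dotProduct,
        one_mul, neg_le_neg_iff]
      exact hu i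
  have hPext : ∀ x y, P x → (∀ s, β s ≤ r s ⬝ᵥ y) →
      (∀ s, r s ⬝ᵥ x = β s → r s ⬝ᵥ y = β s) → P y := by
    rintro x y ⟨hE, hI, hl, hu⟩ hiy htight
    refine ⟨?_, ?_, ?_, ?_⟩
    · funext i
      have hx : r (Sum.inl i) ⬝ᵥ x = β (Sum.inl i) := by
        simp only [hrdef, hβdef, Sum.elim_inl]
        have : (A_E *ᵥ x) i = A_E i ⬝ᵥ x := rfl
        rw [← this, hE]
      have := htight _ hx
      exact (by simpa only [hrdef, hβdef, Sum.elim_inl] using this : A_E i ⬝ᵥ y = b_E i)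
    · intro j
      have := hiy (Sum.inr (Sum.inl j))
      exact (by simpa only [hrdef, hβdef, Sum.elim_inr, Sum.elim_inl] using this : b_I j ≤ A_I j ⬝ᵥ y)
    · intro i
      have := hiy (Sum.inr (Sum.inr (Sum.inl i)))
      simpa only [hrdef, hβdef, Sum.elim_inr, Sum.elim_inl, single_dotProduct,
        one_mul] using this
    · intro i
      have := hiy (Sum.inr (Sum.inr (Sum.inr i)))
      simp only [hrdef, hβdef, Sum.elim_inr, neg_dotProduct, single_dotProduct,
        one_mul, neg_le_neg_iff] at this
      exact this
  have hdir : ∀ w : Fin d → ℝ, w ≠ 0 → ∃ s, r s ⬝ᵥ w < 0 := by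
    intro w hw
    obtain ⟨i, hi⟩ := Function.ne_iff.mp hw
    rcases lt_or_gt_of_ne hi with h | h
    · refine ⟨Sum.inr (Sum.inr (Sum.inl i)), ?_⟩
      simpa only [hrdef, Sum.elim_inr, Sum.elim_inl, single_dotProduct, one_mul, Pi.zero_apply] using h
    · refine ⟨Sum.inr (Sum.inr (Sum.inr i)), ?_⟩
      simp only [hrdef, Sum.elim_inr, neg_dotProduct, single_dotProduct, one_mul,
        neg_lt, neg_zero]
      have : (0:ℝ) < w i := h
      linarith
  obtain ⟨x₀, hx₀, hx₀opt⟩ := hopt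
  obtain ⟨x, hx, hxopt, hnoz⟩ := lp_main r β c P hPle hPext hdir x₀ hx₀ hx₀opt
  obtain ⟨S, hScard, hSli, hStight⟩ := lp_extract r β x (lp_span_top r β x hnoz)
  exact ⟨x, hx, ⟨S, hScard, hSli, hStight⟩, hxopt⟩
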